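/- Let E ≥ 1, M ≥ 2, 1 ≤ ℓ_max < M, and η ∈ (0,1). For each b ∈ {0,…,E} let (Ξ_{ℓ,b})_{ℓ=0}^{min(b,ℓ_max)} be nonnegative with Σ_ℓ Ξ_{ℓ,b} = 1, and assume Ξ_{0,b} > 0 for every b ∈ {0,…,E} and Ξ_{min(b,ℓ_max),b} > 0 for every b ∈ {1,…,E}. Define the (E+1)×(E+1) matrix P by P(b₁, b₂) := Σ_ℓ Ξ_{ℓ,b₁} · Bino(b₂ − b₁ + ℓ; M, η) for 0 ≤ b₂ < E and P(b₁, E) := Σ_ℓ Ξ_{ℓ,b₁} · ( 1 − Σ_{k=0}^{E−b₁+ℓ−1} Bino(k; M, η) ), where Bino(k; M, η) := C(M,k)·η^k·(1−η)^{M−k} for 0 ≤ k ≤ M and Bino(k; M, η) := 0 otherwise. Then P is irreducible: for every pair b₁, b₂ ∈ {0,…,E} there exists an integer n ≥ 1 such that the (b₁, b₂) entry of the matrix power Pⁿ is strictly positive. -/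

import Mathlib

/-- `Bino(k; M, η) := C(M,k)·η^k·(1−η)^{M−k}` for `0 ≤ k ≤ M`, and `0` otherwise. -/
noncomputable def bino (M : ℕ) (η : ℝ) (k : ℤ) : ℝ :=
  if 0 ≤ k ∧ k ≤ M then
    (M.choose k.toNat : ℝ) * η ^ k.toNat * (1 - η) ^ (M - k.toNat)
  else 0

/-- Transition matrix of the initial battery level Markov chain (Theorem 2, AVOID
scheme with maximum degree `ℓ_max`): a device with initial level `b₁` spends
`ℓ ≤ min(b₁, ℓ_max)` units with probability `Ξ_{ℓ,b₁}`;
`P(b₁, b₂) = Σ_ℓ Ξ_{ℓ,b₁}·Bino(b₂ − b₁ + ℓ; M, η)` for `b₂ < E`, and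
`P(b₁, E) = Σ_ℓ Ξ_{ℓ,b₁}·(1 − Σ_{k=0}^{E−b₁+ℓ−1} Bino(k; M, η))`. -/
noncomputable def transPmat (E M ℓmax : ℕ) (η : ℝ) (Ξ : ℕ → ℕ → ℝ) :
    Matrix (Fin (E + 1)) (Fin (E + 1)) ℝ := fun b₁ b₂ =>
  if (b₂ : ℕ) < E then
    ∑ ℓ ∈ Finset.range (min (b₁ : ℕ) ℓmax + 1),
      Ξ ℓ (b₁ : ℕ) * bino M η (((b₂ : ℕ) : ℤ) - ((b₁ : ℕ) : ℤ) + (ℓ : ℤ))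
  else
    ∑ ℓ ∈ Finset.range (min (b₁ : ℕ) ℓmax + 1),
      Ξ ℓ (b₁ : ℕ) * (1 - ∑ k ∈ Finset.range (E - (b₁ : ℕ) + ℓ), bino M η (k : ℤ))

/-- under the stated positivity assumptions on the conditional energy
expenditure distribution `Ξ`, the transition matrix is irreducible: for every pair of
states `b₁, b₂ ∈ {0,…,E}` there is `n ≥ 1` with `(Pⁿ)(b₁, b₂) > 0`. -/
lemma bino_nonneg (M : ℕ) (η : ℝ) (h0 : 0 ≤ η) (h1 : η ≤ 1) (k : ℤ) :
    0 ≤ bino M η k := by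
  unfold bino
  split
  · have h2 : (0:ℝ) ≤ 1 - η := by linarith
    positivity
  · exact le_refl 0

lemma bino_pos (M : ℕ) (η : ℝ) (h0 : 0 < η) (h1 : η < 1) (k : ℤ)
    (hk0 : 0 ≤ k) (hkM : k ≤ M) : 0 < bino M η k := by
  unfold bino
  rw [if_pos ⟨hk0, hkM⟩]
  have h2 : (0:ℝ) < 1 - η := by linarith
  have h3 : 0 < (M.choose k.toNat : ℝ) := by
    exact_mod_cast Nat.choose_pos (by omega)
  positivity

lemma sum_bino_eq_one (M : ℕ) (η : ℝ) :
    ∑ k ∈ Finset.range (M+1), bino M η (k:ℤ) = 1 := by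
  have h := add_pow η (1-η) M
  have h1 : η + (1-η) = 1 := by ring
  rw [h1, one_pow] at h
  rw [h]
  apply Finset.sum_congr rfl
  intro k hk
  have hkM : k ≤ M := by
    simp only [Finset.mem_range] at hk; omega
  unfold bino
  rw [if_pos ⟨by positivity, by exact_mod_cast hkM⟩]
  simp only [Int.toNat_natCast]
  ring

lemma bino_eq_zero (M : ℕ) (η : ℝ) (k : ℤ) (hk : (M:ℤ) < k) : bino M η k = 0 := by
  unfold bino
  rw [if_neg]
  push_neg
  intro _
  omega

lemma sum_bino_le_one (M : ℕ) (η : ℝ) (h0 : 0 ≤ η) (h1 : η ≤ 1) (j : ℕ) :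
    ∑ k ∈ Finset.range j, bino M η (k:ℤ) ≤ 1 := by
  have hsub : ∑ k ∈ Finset.range j, bino M η (k:ℤ) ≤
      ∑ k ∈ Finset.range (max j (M+1)), bino M η (k:ℤ) := by
    apply Finset.sum_le_sum_of_subset_of_nonneg
    · exact Finset.range_subset_range.mpr (le_max_left _ _)
    · intro i _ _; exact bino_nonneg M η h0 h1 _
  have heq : ∑ k ∈ Finset.range (max j (M+1)), bino M η (k:ℤ) =
      ∑ k ∈ Finset.range (M+1), bino M η (k:ℤ) := by
    symm
    apply Finset.sum_subset (Finset.range_subset_range.mpr (le_max_right _ _))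
    intro x _ hx
    simp only [Finset.mem_range] at hx
    exact bino_eq_zero M η x (by omega)
  rw [heq, sum_bino_eq_one] at hsub
  exact hsub

lemma sum_bino_lt_one (M : ℕ) (η : ℝ) (h0 : 0 < η) (h1 : η < 1) (r : ℕ) (hr : r ≤ M) :
    ∑ k ∈ Finset.range r, bino M η (k:ℤ) < 1 := by
  have h2 := sum_bino_le_one M η h0.le h1.le (r+1)
  rw [Finset.sum_range_succ] at h2
  have h3 := bino_pos M η h0 h1 r (by positivity) (by exact_mod_cast hr)
  linarith

section Pmat

variable (E M ℓmax : ℕ) (η : ℝ) (Ξ : ℕ → ℕ → ℝ)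

lemma P_nonneg (hη0 : 0 < η) (hη1 : η < 1)
    (hΞ0 : ∀ b ≤ E, ∀ ℓ ≤ min b ℓmax, 0 ≤ Ξ ℓ b) :
    ∀ b₁ b₂ : Fin (E+1), 0 ≤ transPmat E M ℓmax η Ξ b₁ b₂ := by
  intro b₁ b₂
  have hiE : (b₁ : ℕ) ≤ E := by have := b₁.isLt; omega
  unfold transPmat
  split
  · apply Finset.sum_nonneg
    intro ℓ hℓ
    simp only [Finset.mem_range] at hℓ
    exact mul_nonneg (hΞ0 _ (by omega) ℓ (by omega)) (bino_nonneg M η hη0.le hη1.le _)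
  · apply Finset.sum_nonneg
    intro ℓ hℓ
    simp only [Finset.mem_range] at hℓ
    exact mul_nonneg (hΞ0 _ (by omega) ℓ (by omega))
      (sub_nonneg.mpr (sum_bino_le_one M η hη0.le hη1.le _))

lemma step_pos (hE : 1 ≤ E) (hM : 2 ≤ M)
    (hℓ1 : 1 ≤ ℓmax) (hℓM : ℓmax < M)
    (hη0 : 0 < η) (hη1 : η < 1)
    (hΞ0 : ∀ b ≤ E, ∀ ℓ ≤ min b ℓmax, 0 ≤ Ξ ℓ b)
    (hΞzero : ∀ b ≤ E, 0 < Ξ 0 b)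
    (hΞtop : ∀ b, 1 ≤ b → b ≤ E → 0 < Ξ (min b ℓmax) b) :
    ∀ b₁ b₂ : Fin (E+1), (b₁ : ℕ) ≤ (b₂ : ℕ) + 1 → (b₂ : ℕ) ≤ (b₁ : ℕ) + 1 →
      0 < transPmat E M ℓmax η Ξ b₁ b₂ := by
  intro b₁ b₂ h1 h2
  have hiE : (b₁ : ℕ) ≤ E := by have := b₁.isLt; omega
  have hjE : (b₂ : ℕ) ≤ E := by have := b₂.isLt; omega
  unfold transPmat
  split
  case isTrue hj =>
    apply Finset.sum_pos'
    · intro ℓ hℓ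
      simp only [Finset.mem_range] at hℓ
      exact mul_nonneg (hΞ0 _ hiE ℓ (by omega)) (bino_nonneg M η hη0.le hη1.le _)
    · by_cases hij : (b₁ : ℕ) ≤ (b₂ : ℕ)
      · refine ⟨0, Finset.mem_range.mpr (by omega), ?_⟩
        apply mul_pos (hΞzero _ hiE)
        exact bino_pos M η hη0 hη1 _ (by push_cast; omega) (by push_cast; omega)
      · -- b₂ = b₁ - 1, b₁ ≥ 1
        have hi1 : 1 ≤ (b₁ : ℕ) := by omega
        refine ⟨min (b₁ : ℕ) ℓmax, Finset.mem_range.mpr (by omega), ?_⟩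
        apply mul_pos (hΞtop _ hi1 hiE)
        have hmin : 1 ≤ min (b₁ : ℕ) ℓmax := by omega
        have hmin2 : min (b₁ : ℕ) ℓmax ≤ ℓmax := min_le_right _ _
        exact bino_pos M η hη0 hη1 _ (by push_cast; omega) (by push_cast; omega)
  case isFalse hj =>
    have hjE' : (b₂ : ℕ) = E := by omega
    apply Finset.sum_pos'
    · intro ℓ hℓ
      simp only [Finset.mem_range] at hℓ
      exact mul_nonneg (hΞ0 _ hiE ℓ (by omega))
        (sub_nonneg.mpr (sum_bino_le_one M η hη0.le hη1.le _))
    · refine ⟨0, Finset.mem_range.mpr (by omega), ?_⟩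
      apply mul_pos (hΞzero _ hiE)
      rw [sub_pos]
      exact sum_bino_lt_one M η hη0 hη1 _ (by omega)

end Pmat

theorem stmt_11 (E M ℓmax : ℕ) (hE : 1 ≤ E) (hM : 2 ≤ M)
    (hℓ1 : 1 ≤ ℓmax) (hℓM : ℓmax < M)
    (η : ℝ) (hη0 : 0 < η) (hη1 : η < 1)
    (Ξ : ℕ → ℕ → ℝ)
    (hΞ0 : ∀ b ≤ E, ∀ ℓ ≤ min b ℓmax, 0 ≤ Ξ ℓ b)
    (hΞ1 : ∀ b ≤ E, ∑ ℓ ∈ Finset.range (min b ℓmax + 1), Ξ ℓ b = 1)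
    (hΞzero : ∀ b ≤ E, 0 < Ξ 0 b)
    (hΞtop : ∀ b, 1 ≤ b → b ≤ E → 0 < Ξ (min b ℓmax) b) :
    ∀ b₁ b₂ : Fin (E + 1), ∃ n : ℕ, 1 ≤ n ∧
      0 < (transPmat E M ℓmax η Ξ ^ n) b₁ b₂ := by
  set P := transPmat E M ℓmax η Ξ with hP
  have hPnn := P_nonneg E M ℓmax η Ξ hη0 hη1 hΞ0
  have hstep := step_pos E M ℓmax η Ξ hE hM hℓ1 hℓM hη0 hη1 hΞ0 hΞzero hΞtop
  have hpow_nn : ∀ n : ℕ, ∀ b₁ b₂ : Fin (E+1), 0 ≤ (P ^ n) b₁ b₂ := by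
    intro n
    induction n with
    | zero =>
      intro b₁ b₂
      rw [pow_zero, Matrix.one_apply]
      split <;> norm_num
    | succ n ih =>
      intro b₁ b₂
      rw [pow_succ, Matrix.mul_apply]
      exact Finset.sum_nonneg fun k _ => mul_nonneg (ih b₁ k) (hPnn k b₂)
  have key : ∀ n : ℕ, ∀ b₁ b₂ : Fin (E+1),
      (b₁ : ℕ) ≤ (b₂ : ℕ) + (n+1) → (b₂ : ℕ) ≤ (b₁ : ℕ) + (n+1) →
      0 < (P ^ (n+1)) b₁ b₂ := by
    intro n
    induction n with
    | zero =>
      intro b₁ b₂ h1 h2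
      rw [pow_one]
      exact hstep b₁ b₂ h1 h2
    | succ n ih =>
      intro b₁ b₂ h1 h2
      have hb₂ := b₂.isLt
      have hb₁ := b₁.isLt
      obtain ⟨b₃, hs1, hs2, hm1, hm2⟩ :
          ∃ b₃ : Fin (E+1), (b₁ : ℕ) ≤ (b₃ : ℕ) + 1 ∧ (b₃ : ℕ) ≤ (b₁ : ℕ) + 1 ∧
            (b₃ : ℕ) ≤ (b₂ : ℕ) + (n+1) ∧ (b₂ : ℕ) ≤ (b₃ : ℕ) + (n+1) := by
        rcases lt_trichotomy (b₁ : ℕ) (b₂ : ℕ) with h | h | h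
        · exact ⟨⟨(b₁ : ℕ) + 1, by omega⟩, by simp only [Fin.val_mk]; omega, by simp only [Fin.val_mk]; omega,
            by simp only [Fin.val_mk]; omega, by simp only [Fin.val_mk]; omega⟩
        · exact ⟨b₁, by omega, by omega, by omega, by omega⟩
        · exact ⟨⟨(b₁ : ℕ) - 1, by omega⟩, by simp only [Fin.val_mk]; omega, by simp only [Fin.val_mk]; omega,
            by simp only [Fin.val_mk]; omega, by simp only [Fin.val_mk]; omega⟩
      rw [pow_succ', Matrix.mul_apply]
      apply Finset.sum_pos'
      · intro k _
        exact mul_nonneg (hPnn b₁ k) (hpow_nn _ k b₂)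
      · exact ⟨b₃, Finset.mem_univ _,
          mul_pos (hstep b₁ b₃ hs1 hs2) (ih b₃ b₂ hm1 hm2)⟩
  intro b₁ b₂
  refine ⟨E, hE, ?_⟩
  obtain ⟨n, hn⟩ : ∃ n, E = n + 1 := ⟨E - 1, by omega⟩
  have h := key n b₁ b₂ (by have := b₁.isLt; have := b₂.isLt; omega)
    (by have := b₁.isLt; have := b₂.isLt; omega)
  rwa [← hn] at h
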